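/- Let n, q ∈ ℕ, let f : ℝⁿ × ℝ^q → ℝⁿ, let U ⊆ ℝ^q be a nonempty input-constraint set, and write f̄(x) := f(x,0). Let h : ℝⁿ → ℝ, m ≥ 1, and φ_1,…,φ_m ∈ (0,1]. Define ψ_0 := h; for l = 1,…,m−1, ψ_l(x) := ψ_{l−1}(f̄(x)) − ψ_{l−1}(x) + φ_l ψ_{l−1}(x); and ψ_m(x,u) := ψ_{m−1}(f(x,u)) − ψ_{m−1}(x) + φ_m ψ_{m−1}(x). Define C^l := {x ∈ ℝⁿ : ψ_l(x) ≥ 0} for l = 0,…,m−1. Assume (RD): for all x ∈ ℝⁿ, all u ∈ U and all 0 ≤ l ≤ m−2, h(f̄^l(f(x,u))) = h(f̄^{l+1}(x)). Let x : ℕ → ℝⁿ and u : ℕ → ℝ^q satisfy u(t) ∈ U, x(t+1) = f(x(t), u(t)), and ψ_m(x(t), u(t)) ≥ 0 for all t ∈ ℕ, with x(0) ∈ ⋂_{l=0}^{m−1} C^l. Then x(t) ∈ ⋂_{l=0}^{m−1} C^l for all t ∈ ℕ; in particular h(x(t)) ≥ 0 for all t ∈ ℕ. -/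
import Mathlib


/-- Forward invariance of the intersection of the DHCBF safe sets: under the
relative-degree condition (RD), any admissible trajectory satisfying the
DHCBF constraint `ψ_m(x(t),u(t)) ≥ 0` at every time step and starting in
`⋂ C^l` stays in `⋂ C^l` forever; in particular `h(x(t)) ≥ 0` for all `t`. -/
theorem dhcbf_forward_invariance
    (n q : ℕ) (f : (Fin n → ℝ) → (Fin q → ℝ) → (Fin n → ℝ))
    (U : Set (Fin q → ℝ)) (hU : U.Nonempty)
    (h : (Fin n → ℝ) → ℝ) (m : ℕ) (hm : 1 ≤ m) (φ : ℕ → ℝ)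
    (hφ : ∀ l : ℕ, 1 ≤ l → l ≤ m → 0 < φ l ∧ φ l ≤ 1)
    (ψ : ℕ → (Fin n → ℝ) → ℝ)
    (hψ0 : ψ 0 = h)
    (hψ : ∀ l : ℕ, l < m - 1 → ∀ x,
      ψ (l + 1) x = ψ l (f x 0) - ψ l x + φ (l + 1) * ψ l x)
    (hRD : ∀ x : Fin n → ℝ, ∀ u ∈ U, ∀ l : ℕ, l + 2 ≤ m →
      h ((fun y => f y 0)^[l] (f x u)) = h ((fun y => f y 0)^[l + 1] x))
    (x : ℕ → (Fin n → ℝ)) (u : ℕ → (Fin q → ℝ))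
    (hu : ∀ t : ℕ, u t ∈ U)
    (hdyn : ∀ t : ℕ, x (t + 1) = f (x t) (u t))
    (hcbf : ∀ t : ℕ,
      ψ (m - 1) (f (x t) (u t)) - ψ (m - 1) (x t)
        + φ m * ψ (m - 1) (x t) ≥ 0)
    (hinit : ∀ l < m, ψ l (x 0) ≥ 0) :
    (∀ t : ℕ, ∀ l < m, ψ l (x t) ≥ 0) ∧ (∀ t : ℕ, h (x t) ≥ 0) := by
  -- Key claim: for l + j ≤ m - 2, ψ_l (f̄^[j] (f x u)) = ψ_l (f̄^[j+1] x)
  have key : ∀ l : ℕ, ∀ j : ℕ, l + j + 2 ≤ m → ∀ z : Fin n → ℝ, ∀ w ∈ U,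
      ψ l ((fun y => f y 0)^[j] (f z w)) = ψ l ((fun y => f y 0)^[j + 1] z) := by
    intro l
    induction l with
    | zero =>
      intro j hj z w hw
      simp only [hψ0]
      exact hRD z w hw j (by omega)
    | succ l ih =>
      intro j hj z w hw
      have h1 : l < m - 1 := by omega
      rw [hψ l h1, hψ l h1]
      have e1 : f ((fun y => f y 0)^[j] (f z w)) 0
          = (fun y => f y 0)^[j + 1] (f z w) := by
        rw [Function.iterate_succ_apply']
      have e2 : f ((fun y => f y 0)^[j + 1] z) 0
          = (fun y => f y 0)^[j + 1 + 1] z := by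
        simp [Function.iterate_succ_apply']
      rw [e1, e2, ih j (by omega) z w hw, ih (j + 1) (by omega) z w hw]
  -- main induction
  have main : ∀ t : ℕ, ∀ l < m, ψ l (x t) ≥ 0 := by
    intro t
    induction t with
    | zero => exact hinit
    | succ t iht =>
      intro l hl
      rcases eq_or_lt_of_le (Nat.lt_iff_add_one_le.mp hl) with heq | hlt
      · -- l = m - 1
        have hlm : l = m - 1 := by omega
        have hc := hcbf t
        rw [hdyn t, hlm]
        have hφm := hφ m hm le_rfl
        have hψt : ψ (m - 1) (x t) ≥ 0 := iht (m - 1) (by omega)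
        nlinarith [hc]
      · -- l ≤ m - 2
        have hl1 : l < m - 1 := by omega
        have hk := key l 0 (by omega) (x t) (u t) (hu t)
        simp only [zero_add, Function.iterate_zero_apply, Function.iterate_one] at hk
        rw [hdyn t, hk]
        have hrec := hψ l hl1 (x t)
        have hψl1 : ψ (l + 1) (x t) ≥ 0 := iht (l + 1) (by omega)
        have hψl : ψ l (x t) ≥ 0 := iht l (by omega)
        have hφl := hφ (l + 1) (by omega) (by omega)
        nlinarith [hrec]
  refine ⟨main, fun t => ?_⟩
  have := main t 0 (by omega)
  rwa [hψ0] at this
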